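/- (Iteration bound for weak-label multicalibration boost.) Let μ be a probability measure on a measurable space 𝒳, f★ : 𝒳 → [0,1] measurable, ε > 0, and let f₀, f₁, …, f_M : 𝒳 → [0,1] be measurable predictors such that for every t < M there exist τ_t ∈ {−1, +1} and measurable c_t : 𝒳 → [−1,1], w_t : [0,1] → [−1,1] with τ_t·∫ c_t(x)·w_t(f_t(x))·(f★(x) − f_t(x)) dμ(x) ≥ ε/2 and f_{t+1}(x) = min(1, max(0, f_t(x) + (ε/2)·τ_t·c_t(x)·w_t(f_t(x)))) for all x. Then M ≤ 4·(∫ (f₀(x) − f★(x))² dμ(x))/ε². -/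

import Mathlib

open MeasureTheory

lemma clamp_sq_le (a y : ℝ) (h0 : 0 ≤ y) (h1 : y ≤ 1) :
    (min 1 (max 0 a) - y) ^ 2 ≤ (a - y) ^ 2 := by
  rcases le_total a 0 with h | h
  · rw [max_eq_left h, min_eq_right (by norm_num : (0:ℝ) ≤ 1)]
    nlinarith
  · rw [max_eq_right h]
    rcases le_total a 1 with h' | h'
    · rw [min_eq_right h']
    · rw [min_eq_left h']
      nlinarith

lemma integrable_of_bdd {X : Type*} [MeasurableSpace X] (μ : Measure X) [IsFiniteMeasure μ]
    {g : X → ℝ} (hg : Measurable g) {C : ℝ} (h : ∀ x, |g x| ≤ C) : Integrable g μ :=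
  ⟨hg.aestronglyMeasurable, HasFiniteIntegral.of_bounded (C := C)
    (ae_of_all _ (by simpa [Real.norm_eq_abs] using h))⟩

/-- Iteration bound for weak-label multicalibration boost: if every step of the
boosting procedure updates along a witness violated by at least `ε/2`, then the
number of steps is at most `4·Ψ(f₀)/ε²`. -/
theorem wlmc_iteration_bound {X : Type*} [MeasurableSpace X]
    (μ : Measure X) [IsProbabilityMeasure μ]
    (fstar : X → ℝ) (hfs : Measurable fstar)
    (hfs01 : ∀ x, fstar x ∈ Set.Icc (0:ℝ) 1)
    (ε : ℝ) (hε : 0 < ε) (M : ℕ)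
    (f : ℕ → X → ℝ)
    (hfmeas : ∀ t ≤ M, Measurable (f t))
    (hf01 : ∀ t ≤ M, ∀ x, f t x ∈ Set.Icc (0:ℝ) 1)
    (hstep : ∀ t < M, ∃ (τ : ℝ) (c : X → ℝ) (w : ℝ → ℝ),
      (τ = -1 ∨ τ = 1) ∧ Measurable c ∧ (∀ x, c x ∈ Set.Icc (-1:ℝ) 1) ∧
      Measurable w ∧ (∀ v ∈ Set.Icc (0:ℝ) 1, w v ∈ Set.Icc (-1:ℝ) 1) ∧
      ε / 2 ≤ τ * ∫ x, c x * w (f t x) * (fstar x - f t x) ∂μ ∧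
      ∀ x, f (t + 1) x = min 1 (max 0 (f t x + ε / 2 * τ * (c x * w (f t x))))) :
    (M : ℝ) ≤ 4 * (∫ x, (f 0 x - fstar x) ^ 2 ∂μ) / ε ^ 2 := by
  set Φ : ℕ → ℝ := fun t => ∫ x, (f t x - fstar x) ^ 2 ∂μ with hΦdef
  have hΦnn : ∀ t, 0 ≤ Φ t := fun t => integral_nonneg fun x => sq_nonneg _
  have hIsq : ∀ t, t ≤ M → Integrable (fun x => (f t x - fstar x) ^ 2) μ := by
    intro t ht
    apply integrable_of_bdd μ (((hfmeas t ht).sub hfs).pow_const 2) (C := 1)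
    intro x
    show |(f t x - fstar x) ^ 2| ≤ 1
    have h1 := hf01 t ht x
    have h2 := hfs01 x
    rw [abs_le]
    constructor <;> nlinarith [h1.1, h1.2, h2.1, h2.2]
  have key : ∀ t, t < M → Φ (t + 1) + ε ^ 2 / 4 ≤ Φ t := by
    intro t ht
    obtain ⟨τ, c, w, hτ, hc, hcb, hw, hwb, hgap, hupd⟩ := hstep t ht
    have hft := hfmeas t ht.le
    have hft01 := hf01 t ht.le
    have hτ1 : |τ| = 1 := by rcases hτ with h | h <;> simp [h]
    have hub : ∀ x, |τ * (c x * w (f t x))| ≤ 1 := by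
      intro x
      rw [abs_mul, abs_mul, hτ1, one_mul]
      have h1 := abs_le.mpr ⟨(hcb x).1, (hcb x).2⟩
      have h2 := abs_le.mpr ⟨(hwb _ (hft01 x)).1, (hwb _ (hft01 x)).2⟩
      nlinarith [abs_nonneg (c x), abs_nonneg (w (f t x))]
    have hwf : Measurable (fun x => w (f t x)) := hw.comp hft
    have hI2 : Integrable (fun x => τ * (c x * w (f t x)) * (f t x - fstar x)) μ := by
      apply integrable_of_bdd μ
        ((measurable_const.mul (hc.mul hwf)).mul (hft.sub hfs)) (C := 1)
      intro x
      show |τ * (c x * w (f t x)) * (f t x - fstar x)| ≤ 1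
      rw [abs_mul]
      have h1 := hub x
      have h2 : |f t x - fstar x| ≤ 1 := by
        have := hft01 x; have := hfs01 x
        rw [abs_le]; constructor <;> nlinarith [(hft01 x).1, (hft01 x).2, (hfs01 x).1, (hfs01 x).2]
      have := mul_le_mul h1 h2 (abs_nonneg _) zero_le_one
      linarith
    have hpt : ∀ x, (f (t + 1) x - fstar x) ^ 2 ≤
        (f t x - fstar x) ^ 2 + ε * (τ * (c x * w (f t x)) * (f t x - fstar x)) + ε ^ 2 / 4 := by
      intro x
      rw [hupd x]
      have h1 := clamp_sq_le (f t x + ε / 2 * τ * (c x * w (f t x))) (fstar x)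
        (hfs01 x).1 (hfs01 x).2
      have h2 := abs_le.mp (hub x)
      have hu2 : (τ * (c x * w (f t x))) ^ 2 ≤ 1 := by nlinarith [h2.1, h2.2]
      nlinarith [sq_nonneg ε, hu2, h1]
    have hmono : Φ (t + 1) ≤ ∫ x, ((f t x - fstar x) ^ 2
        + ε * (τ * (c x * w (f t x)) * (f t x - fstar x)) + ε ^ 2 / 4) ∂μ := by
      apply integral_mono (hIsq (t + 1) ht)
        (((hIsq t ht.le).add (hI2.const_mul ε)).add (integrable_const _)) hpt
    have hsplit : ∫ x, ((f t x - fstar x) ^ 2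
        + ε * (τ * (c x * w (f t x)) * (f t x - fstar x)) + ε ^ 2 / 4) ∂μ
        = Φ t + ε * (∫ x, τ * (c x * w (f t x)) * (f t x - fstar x) ∂μ) + ε ^ 2 / 4 := by
      have hA : Integrable (fun x => (f t x - fstar x) ^ 2
          + ε * (τ * (c x * w (f t x)) * (f t x - fstar x))) μ := by
        exact (hIsq t ht.le).add (hI2.const_mul ε)
      have hB : Integrable (fun x => ε * (τ * (c x * w (f t x)) * (f t x - fstar x))) μ := by
        exact hI2.const_mul ε
      rw [integral_add hA (integrable_const _), integral_add (hIsq t ht.le) hB,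
        integral_const_mul, integral_const]
      simp [hΦdef]
    have hrel : ∫ x, τ * (c x * w (f t x)) * (f t x - fstar x) ∂μ
        = -(τ * ∫ x, c x * w (f t x) * (fstar x - f t x) ∂μ) := by
      rw [← integral_const_mul, ← integral_neg]
      congr 1; funext x; ring
    have hεnn : (0:ℝ) ≤ ε := hε.le
    have h3 : ε * (∫ x, τ * (c x * w (f t x)) * (f t x - fstar x) ∂μ) ≤ ε * (-(ε / 2)) := by
      apply mul_le_mul_of_nonneg_left _ hεnn
      rw [hrel]
      linarith [hgap]
    nlinarith [hmono, hsplit, h3]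
  have main : ∀ t, t ≤ M → (t : ℝ) * (ε ^ 2 / 4) + Φ t ≤ Φ 0 := by
    intro t
    induction t with
    | zero => intro _; simp
    | succ n ih =>
      intro h
      have h1 := ih (Nat.le_of_succ_le h)
      have h2 := key n (Nat.lt_of_succ_le h)
      push_cast
      linarith
  have hM := main M le_rfl
  have h0 := hΦnn M
  rw [le_div_iff₀ (by positivity : (0:ℝ) < ε ^ 2)]
  nlinarith
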